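/- Let Γ be a finite simple graph of weak type II and let v₁, v₂, v₃ be vertices of Γ. Suppose v₁ and v₃ lie in different connected components of the induced subgraph on the complement of St(v₂). Then v₁ and v₂ lie in the same connected component of the induced subgraph on the complement of St(v₃), and v₃ and v₂ lie in the same connected component of the induced subgraph on the complement of St(v₁). -/

import Mathlib

open SimpleGraph

variable {V : Type*}

/-- The closed star of a vertex: the vertex together with its neighbors. -/
def gstar (G : SimpleGraph V) (v : V) : Set V := insert v (G.neighborSet v)

/-- `a` and `b` lie in the same connected component of the subgraph induced on `s`. -/
def SameComp (G : SimpleGraph V) (s : Set V) (a b : V) : Prop :=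
  ∃ (ha : a ∈ s) (hb : b ∈ s), (G.induce s).Reachable ⟨a, ha⟩ ⟨b, hb⟩

/-- `a` and `b` lie in different connected components of the subgraph induced on `s`. -/
def DiffComp (G : SimpleGraph V) (s : Set V) (a b : V) : Prop :=
  a ∈ s ∧ b ∈ s ∧ ¬ SameComp G s a b

/-- `Γ` is of weak type II. -/
def WeakTypeII (G : SimpleGraph V) : Prop :=
  G.Connected ∧ ∀ v w : V, G.dist v w = 2 →
    (G.induce ((G.neighborSet v ∩ G.neighborSet w)ᶜ)).Connected

/-- `Γ` is of type II. -/
def TypeII (G : SimpleGraph V) : Prop :=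
  G.Connected ∧ ∀ v w : V, v ≠ w →
    (G.induce ((G.neighborSet v ∩ G.neighborSet w)ᶜ)).Connected

lemma sameComp_of_walk {G : SimpleGraph V} {s : Set V} :
    ∀ {a b : V} (w : G.Walk a b), (∀ x ∈ w.support, x ∈ s) → SameComp G s a b
  | a, _, Walk.nil, hw => ⟨hw a (by simp), hw a (by simp), Reachable.refl _⟩
  | a, b, Walk.cons h p, hw => by
    have hx : a ∈ s := hw a (by simp)
    obtain ⟨hy, hz, hr⟩ := sameComp_of_walk p (fun u hu => hw u (by simp [hu]))
    exact ⟨hx, hz, ((show (G.induce s).Adj ⟨a, hx⟩ ⟨_, hy⟩ from h).reachable).trans hr⟩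

lemma induceWalk_to_walk {G : SimpleGraph V} {s : Set V} :
    ∀ {a b : s} (_ : (G.induce s).Walk a b), ∃ w' : G.Walk a.1 b.1, ∀ x ∈ w'.support, x ∈ s
  | a, _, Walk.nil => ⟨Walk.nil, by simpa using a.2⟩
  | a, b, Walk.cons h p => by
    obtain ⟨w', hw'⟩ := induceWalk_to_walk p
    refine ⟨Walk.cons (by exact h) w', ?_⟩
    intro u hu
    rcases List.mem_cons.mp (show u ∈ a.1 :: w'.support from hu) with hu | hu
    · exact hu ▸ a.2
    · exact hw' u hu

lemma walk_of_sameComp {G : SimpleGraph V} {s : Set V} {a b : V}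
    (h : SameComp G s a b) : ∃ w : G.Walk a b, ∀ x ∈ w.support, x ∈ s := by
  obtain ⟨ha, hb, ⟨w⟩⟩ := h
  exact induceWalk_to_walk w

lemma sameComp_refl {G : SimpleGraph V} {s : Set V} {a : V} (ha : a ∈ s) : SameComp G s a a :=
  ⟨ha, ha, Reachable.refl _⟩

lemma sameComp_symm {G : SimpleGraph V} {s : Set V} {a b : V}
    (h : SameComp G s a b) : SameComp G s b a := by
  obtain ⟨ha, hb, hr⟩ := h; exact ⟨hb, ha, hr.symm⟩

lemma sameComp_trans {G : SimpleGraph V} {s : Set V} {a b c : V}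
    (h1 : SameComp G s a b) (h2 : SameComp G s b c) : SameComp G s a c := by
  obtain ⟨ha, hb, hr⟩ := h1; obtain ⟨hb', hc, hr'⟩ := h2
  exact ⟨ha, hc, hr.trans (by convert hr')⟩

lemma sameComp_adj {G : SimpleGraph V} {s : Set V} {a b : V}
    (ha : a ∈ s) (hb : b ∈ s) (h : G.Adj a b) : SameComp G s a b :=
  ⟨ha, hb, (show (G.induce s).Adj ⟨a, ha⟩ ⟨b, hb⟩ from h).reachable⟩

/-- Every vertex on a walk witnessing membership in `s` starting at `a` is in the
same component as `a`. -/
lemma sameComp_support {G : SimpleGraph V} {s : Set V} :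
    ∀ {a b : V} (w : G.Walk a b), (∀ x ∈ w.support, x ∈ s) →
      ∀ x ∈ w.support, SameComp G s a x
  | a, _, Walk.nil, hw => by
    intro x hx
    simp only [Walk.support_nil, List.mem_singleton] at hx
    subst hx
    exact sameComp_refl (hw x (by simp))
  | a, b, @Walk.cons _ _ _ y _ h p, hw => by
    intro x hx
    have ha : a ∈ s := hw a (by simp)
    have hy : y ∈ s := hw y (by simp)
    rcases List.mem_cons.mp (by simpa using hx) with hx | hx
    · subst hx; exact sameComp_refl ha
    · exact sameComp_trans (sameComp_adj ha hy h)
        (sameComp_support p (fun u hu => hw u (by simp [hu])) x hx)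

/-- Along a walk from `x` to `v₂` avoiding `K`, with `x` outside the closed star of `v₂`,
we can find `a` in the component of `x` and `u ∉ K` with `a ~ u ~ v₂`. -/
lemma exit_lemma {G : SimpleGraph V} {v₂ : V} {K : Set V} :
    ∀ {x : V} (w : G.Walk x v₂), (∀ u ∈ w.support, u ∉ K) → x ∈ (gstar G v₂)ᶜ →
      ∃ a u, SameComp G (gstar G v₂)ᶜ x a ∧ G.Adj a u ∧ G.Adj u v₂ ∧ u ∉ K
  | _, Walk.nil, _, hx => absurd (Set.mem_insert _ _) hx
  | x, @Walk.cons _ _ _ y _ h p, hK, hx => by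
    by_cases hy : y ∈ gstar G v₂
    · rcases Set.mem_insert_iff.mp hy with rfl | hy2
      · exact absurd (Set.mem_insert_iff.mpr (Or.inr h.symm)) hx
      · exact ⟨x, y, sameComp_refl hx, h, hy2.symm, hK y (by simp)⟩
    · obtain ⟨a, u, hsc, hau, huv, huK⟩ :=
        exit_lemma p (fun u hu => hK u (by simp [hu])) hy
      exact ⟨a, u, sameComp_trans (sameComp_adj hx hy h) hsc, hau, huv, huK⟩

lemma key_lemma {G : SimpleGraph V} (h : WeakTypeII G) {v₁ v₂ v₃ : V}
    (h1 : v₁ ∈ (gstar G v₂)ᶜ) (h3 : v₃ ∈ (gstar G v₂)ᶜ)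
    (hns : ¬ SameComp G (gstar G v₂)ᶜ v₁ v₃) :
    SameComp G (gstar G v₃)ᶜ v₁ v₂ := by
  have hn21 : ¬ G.Adj v₂ v₁ := fun ha => h1 (Set.mem_insert_iff.mpr (Or.inr ha))
  have hn23 : ¬ G.Adj v₂ v₃ := fun ha => h3 (Set.mem_insert_iff.mpr (Or.inr ha))
  have hne32 : v₃ ≠ v₂ := fun he => h3 (Set.mem_insert_iff.mpr (Or.inl he))
  set K : Set V := G.neighborSet v₂ ∩ G.neighborSet v₃ with hKdef
  -- the component of v₁ in the complement of St(v₂) avoids St(v₃)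
  have hC : ∀ x, SameComp G (gstar G v₂)ᶜ v₁ x → x ∉ gstar G v₃ := by
    intro x hx hmem
    rcases Set.mem_insert_iff.mp hmem with rfl | hadj
    · exact hns hx
    · obtain ⟨-, hxs, -⟩ := id hx
      exact hns (sameComp_trans hx (sameComp_adj hxs h3 hadj.symm))
  -- connectivity of the complement of K
  have hKc : (G.induce Kᶜ).Connected := by
    by_cases hK : K = ∅
    · rw [hK, Set.compl_empty]
      exact (Iso.connected_iff (induceUnivIso G)).mpr h.1
    · obtain ⟨u, hu2, hu3⟩ := Set.nonempty_iff_ne_empty.mpr hK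
      have hdist : G.dist v₂ v₃ = 2 := by
        have hle : G.dist v₂ v₃ ≤ 2 := by
          have := SimpleGraph.dist_le (Walk.cons hu2 (Walk.cons ((hu3 : G.Adj v₃ u).symm) Walk.nil))
          exact this
        have h0 : G.dist v₂ v₃ ≠ 0 := fun hz =>
          hne32.symm (h.1.dist_eq_zero_iff.mp hz)
        have h1' : G.dist v₂ v₃ ≠ 1 := fun hz => hn23 (dist_eq_one_iff_adj.mp hz)
        omega
      exact h.2 v₂ v₃ hdist
  have h1K : v₁ ∈ Kᶜ := fun hm => hn21 hm.1
  have h2K : v₂ ∈ Kᶜ := fun hm => G.irrefl hm.1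
  obtain ⟨w, hw⟩ := walk_of_sameComp ⟨h1K, h2K, hKc.preconnected ⟨v₁, h1K⟩ ⟨v₂, h2K⟩⟩
  obtain ⟨a, u, hsc, hau, huv2, huK⟩ := exit_lemma w (fun x hx => hw x hx) h1
  have haT : a ∉ gstar G v₃ := hC a hsc
  have huT : u ∉ gstar G v₃ := by
    intro hm
    rcases Set.mem_insert_iff.mp hm with rfl | hadj
    · exact hn23 huv2.symm
    · exact huK ⟨huv2.symm, hadj⟩
  have hv2T : v₂ ∉ gstar G v₃ := by
    intro hm
    rcases Set.mem_insert_iff.mp hm with rfl | hadj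
    · exact hne32 rfl
    · exact hn23 hadj.symm
  obtain ⟨w', hw'⟩ := walk_of_sameComp hsc
  have h1a : SameComp G (gstar G v₃)ᶜ v₁ a :=
    sameComp_of_walk w' (fun x hx => hC x (sameComp_support w' hw' x hx))
  exact sameComp_trans h1a
    (sameComp_trans (sameComp_adj haT huT hau) (sameComp_adj huT hv2T huv2))

/-- Γ of weak type II; if `v₁` and `v₃` lie in different components of the
complement of `St(v₂)`, then `v₁, v₂` lie in the same component of the complement of
`St(v₃)`, and `v₃, v₂` lie in the same component of the complement of `St(v₁)`. -/
theorem stmt_4 [Fintype V] (G : SimpleGraph V) (h : WeakTypeII G)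
    (v₁ v₂ v₃ : V) (hdiff : DiffComp G (gstar G v₂)ᶜ v₁ v₃) :
    SameComp G (gstar G v₃)ᶜ v₁ v₂ ∧ SameComp G (gstar G v₁)ᶜ v₃ v₂ := by
  obtain ⟨h1, h3, hns⟩ := hdiff
  exact ⟨key_lemma h h1 h3 hns, key_lemma h h3 h1 (fun hx => hns (sameComp_symm hx))⟩
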